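/- Under the hypotheses of the truncated-Tikhonov expectation lemma (x† = Σ_{i=1}^N c_i v_i with all c_i ≠ 0, mean-zero uncorrelated noise coefficients η_i with variances β_i²), if 2α ≥ max{0, max_{m < N}(β_{m+1}²/c_{m+1}² − σ_{m+1}²)}, then E[‖E_N‖²] ≤ E[‖E_M‖²] for every M ∈ ℕ. -/

import Mathlib

open MeasureTheory

/-- For truncated Tikhonov regularization `T_α^{(M)} y = Σ_{i=1}^M σ_i/(σ_i²+α)⟨y,u_i⟩v_i`
applied to `y^δ = Ax† + η` with `x† = Σ_{i=1}^N c_i v_i` (so that `⟨y^δ, u_i⟩ =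
σ_i c_i + η_i` for `i ≤ N` and `η_i` for `i > N`), mean-zero noise coefficients with
variances `β_i²`: if `2α ≥ max{0, max_{m<N}(β_{m+1}²/c_{m+1}² − σ_{m+1}²)}`, then
truncating at the intrinsic dimension `N` minimizes the expected squared error,
`E‖E_N‖² ≤ E‖E_M‖²` for every `M`. -/
theorem truncated_tikhonov_optimal_truncation
    {X : Type*} [NormedAddCommGroup X] [InnerProductSpace ℝ X]
    {Ω : Type*} [MeasureSpace Ω] [IsProbabilityMeasure (volume : Measure Ω)]
    (v : ℕ → X) (hv : Orthonormal ℝ v)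
    (σ : ℕ → ℝ) (hσ : ∀ i, 0 < σ i)
    (N : ℕ) (c : ℕ → ℝ) (hc : ∀ i ∈ Finset.Icc 1 N, c i ≠ 0)
    (α : ℝ) (hα : 0 < α)
    (η : ℕ → Ω → ℝ) (β : ℕ → ℝ)
    (hint : ∀ i, Integrable (η i))
    (hsq : ∀ i, Integrable (fun ω => (η i ω)^2))
    (hmean : ∀ i, ∫ ω, η i ω = 0)
    (hvar : ∀ i, ∫ ω, (η i ω)^2 = (β i)^2)
    -- coefficients of the noisy data: ⟨y^δ, u_i⟩
    (d : ℕ → Ω → ℝ)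
    (hd : ∀ i ω, d i ω = (if i ≤ N then σ i * c i else 0) + η i ω)
    -- error of truncated Tikhonov regularization at truncation level M
    (E : ℕ → Ω → X)
    (hE : ∀ M ω, E M ω =
      (∑ i ∈ Finset.Icc 1 M, (σ i / ((σ i)^2 + α) * d i ω) • v i)
        - ∑ i ∈ Finset.Icc 1 N, (c i) • v i)
    (hα2 : ∀ m < N, (β (m+1))^2 / (c (m+1))^2 - (σ (m+1))^2 ≤ 2 * α) :
    ∀ M : ℕ, (∫ ω, ‖E N ω‖^2) ≤ (∫ ω, ‖E M ω‖^2) := by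
  intro M
  have hσα : ∀ i, 0 < (σ i)^2 + α := fun i => by have := hσ i; positivity
  set g : ℕ → ℝ := fun i => σ i / ((σ i)^2 + α) with hg
  set P : ℕ → ℕ → ℝ := fun L i =>
    (if i ≤ L then g i * (if i ≤ N then σ i * c i else 0) else 0)
      - (if i ≤ N then c i else 0) with hPdef
  set Q : ℕ → ℕ → ℝ := fun L i => if i ≤ L then g i else 0 with hQdef
  set t : ℕ → ℕ → ℝ := fun L i => (P L i)^2 + (Q L i)^2 * (β i)^2 with htdef
  set K := max M N with hK
  -- integral formula
  have key : ∀ L : ℕ, L ≤ K → (∫ ω, ‖E L ω‖^2) = ∑ i ∈ Finset.Icc 1 K, t L i := by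
    intro L hLK
    have hEL : ∀ ω, E L ω = ∑ i ∈ Finset.Icc 1 K, (P L i + Q L i * η i ω) • v i := by
      intro ω
      rw [hE]
      have h1 : ∑ i ∈ Finset.Icc 1 K, (P L i + Q L i * η i ω) • v i =
          (∑ i ∈ Finset.Icc 1 K, ((if i ≤ L then g i * d i ω else 0) • v i))
            - ∑ i ∈ Finset.Icc 1 K, ((if i ≤ N then c i else 0) • v i) := by
        rw [← Finset.sum_sub_distrib]
        refine Finset.sum_congr rfl fun i _ => ?_
        rw [← sub_smul]
        congr 1
        rw [hd]
        by_cases h : i ≤ L <;> by_cases h2 : i ≤ N <;>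
          simp [hPdef, hQdef, h, h2] <;> ring
      rw [h1]
      congr 1
      · rw [← Finset.sum_subset (Finset.Icc_subset_Icc_right hLK) (fun i hi hni => by
          have h1i : 1 ≤ i := (Finset.mem_Icc.mp hi).1
          have hL : ¬ i ≤ L := fun h => hni (Finset.mem_Icc.mpr ⟨h1i, h⟩)
          simp [hL])]
        exact Finset.sum_congr rfl fun i hi => by
          simp [Finset.mem_Icc.mp hi |>.2, hg]
      · rw [← Finset.sum_subset (Finset.Icc_subset_Icc_right (le_max_right M N))
          (fun i hi hni => by
            have h1i : 1 ≤ i := (Finset.mem_Icc.mp hi).1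
            have hN : ¬ i ≤ N := fun h => hni (Finset.mem_Icc.mpr ⟨h1i, h⟩)
            simp [hN])]
        exact Finset.sum_congr rfl fun i hi => by
          simp [Finset.mem_Icc.mp hi |>.2]
    have hnorm : ∀ ω, ‖E L ω‖^2 = ∑ i ∈ Finset.Icc 1 K, (P L i + Q L i * η i ω)^2 := by
      intro ω
      rw [hEL ω, ← real_inner_self_eq_norm_sq,
        hv.inner_sum (fun i => P L i + Q L i * η i ω) (fun i => P L i + Q L i * η i ω)]
      exact Finset.sum_congr rfl fun i _ => by
        simp [starRingEnd_apply]; ring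
    have hexp : ∀ i, (fun ω => (P L i + Q L i * η i ω)^2) =
        fun ω => (P L i)^2 + (2 * P L i * Q L i) * η i ω + (Q L i)^2 * (η i ω)^2 := by
      intro i; funext ω; ring
    have hintg : ∀ i, Integrable (fun ω => (P L i + Q L i * η i ω)^2) := by
      intro i
      rw [hexp i]
      exact ((integrable_const _).add ((hint i).const_mul _)).add ((hsq i).const_mul _)
    calc (∫ ω, ‖E L ω‖^2) = ∫ ω, ∑ i ∈ Finset.Icc 1 K, (P L i + Q L i * η i ω)^2 := by
          exact integral_congr_ae (Filter.Eventually.of_forall fun ω => hnorm ω)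
      _ = ∑ i ∈ Finset.Icc 1 K, ∫ ω, (P L i + Q L i * η i ω)^2 := by
          exact integral_finset_sum _ fun i _ => hintg i
      _ = ∑ i ∈ Finset.Icc 1 K, t L i := by
          refine Finset.sum_congr rfl fun i _ => ?_
          rw [hexp i]
          have i0 : Integrable (fun _ : Ω => ((P L i)^2 : ℝ)) := integrable_const _
          have i01 : Integrable (fun ω => 2 * P L i * Q L i * η i ω) :=
            (hint i).const_mul _
          have i1 : Integrable (fun ω => (P L i)^2 + 2 * P L i * Q L i * η i ω) :=
            i0.add i01
          have i2 : Integrable (fun ω => (Q L i)^2 * (η i ω)^2) := (hsq i).const_mul _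
          rw [integral_add i1 i2, integral_add i0 i01, integral_const_mul,
            integral_const_mul, hmean, hvar, integral_const]
          simp [htdef]
  rw [key N (le_max_right M N), key M (le_max_left M N)]
  refine Finset.sum_le_sum fun i hi => ?_
  obtain ⟨hi1, hiK⟩ := Finset.mem_Icc.mp hi
  by_cases hiN : i ≤ N
  · by_cases hiM : i ≤ M
    · simp [htdef, hPdef, hQdef, hiN, hiM]
    · -- t N i ≤ t M i = (c i)^2
      have hci : c i ≠ 0 := hc i (Finset.mem_Icc.mpr ⟨hi1, hiN⟩)
      have him : i - 1 < N := Nat.lt_of_lt_of_le (Nat.sub_lt hi1 one_pos) hiN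
      have hβ := hα2 (i-1) him
      rw [Nat.sub_add_cancel hi1] at hβ
      have hc2 : 0 < (c i)^2 := by positivity
      have hβ2 : (β i)^2 ≤ (c i)^2 * ((σ i)^2 + 2*α) := by
        rw [sub_le_iff_le_add] at hβ
        have := (div_le_iff₀ hc2).mp hβ
        nlinarith
      have hD := hσα i
      have hQN : t N i = (g i * (σ i * c i) - c i)^2 + (g i)^2 * (β i)^2 := by
        simp [htdef, hPdef, hQdef, hiN]
      have hQM : t M i = (c i)^2 := by
        simp [htdef, hPdef, hQdef, hiN, hiM]
      rw [hQN, hQM]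
      have e1 : g i * (σ i * c i) - c i = -(c i * α) / ((σ i)^2 + α) := by
        simp only [hg]; field_simp; try ring
      rw [e1]
      have goal2 : ((c i * α)^2 + (σ i)^2 * (β i)^2) ≤ (c i)^2 * ((σ i)^2 + α)^2 := by
        nlinarith [sq_nonneg (σ i), hσ i]
      have e2 : (-(c i * α) / ((σ i)^2 + α))^2 + (g i)^2 * (β i)^2
          = ((c i * α)^2 + (σ i)^2 * (β i)^2) / ((σ i)^2 + α)^2 := by
        simp only [hg]; field_simp; try ring
      rw [e2, div_le_iff₀ (by positivity)]
      exact goal2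
  · -- i > N : t N i = 0
    have hiNL : ¬ i ≤ N := hiN
    simp only [htdef, hPdef, hQdef, if_neg hiNL]
    by_cases hiM : i ≤ M <;> simp [hiM] <;> positivity
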